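/- arXiv:1412.2226 — 2 statements merged into one kernel-verified Lean document; each statement's English description precedes it below -/
import Mathlib

section
/- Suppose m = n (that is, k = 1). An allocation in which each agent receives exactly one item is Pareto optimal if and only if it is the outcome of some serial dictatorship, i.e., some policy in which every agent has exactly one turn. -/
open Finset
open scoped Classical

/-- The most preferred item of a nonempty finset w.r.t. a linear order
(greater means more preferred). -/
noncomputable def favorite {ι : Type} (L : LinearOrder ι) (S : Finset ι) (h : S.Nonempty) : ι :=
  @Finset.max' ι L S h

/-- Sequential allocation: process the turns in order; at each turn the agent whose
turn it is picks her most preferred item among the items not yet allocated.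
Returns the list of (agent, item) picks, in order. -/
noncomputable def seqAlloc {n : ℕ} {ι : Type} [DecidableEq ι]
    (P : Fin n → LinearOrder ι) : List (Fin n) → Finset ι → List (Fin n × ι)
  | [], _ => []
  | a :: rest, S =>
    if h : S.Nonempty then
      (a, favorite (P a) S h) :: seqAlloc P rest (S.erase (favorite (P a) S h))
    else []

/-- `M` is the outcome of the policy `π`: every item is picked by the agent that
`M` assigns it to. -/
def IsOutcome {n : ℕ} {ι : Type} [Fintype ι] [DecidableEq ι]
    (P : Fin n → LinearOrder ι) (π : List (Fin n)) (M : ι → Fin n) : Prop :=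
  ∀ o : ι, (M o, o) ∈ seqAlloc P π Finset.univ

/-- The set of items that agent `a` picks under the policy `π`. -/
noncomputable def receives {n : ℕ} {ι : Type} [Fintype ι] [DecidableEq ι]
    (P : Fin n → LinearOrder ι) (π : List (Fin n)) (a : Fin n) : Finset ι :=
  Finset.univ.filter (fun o => (a, o) ∈ seqAlloc P π Finset.univ)

/-- An allocation `M` is Pareto optimal if there is no bijection `f` of the items such
that every agent weakly prefers `f o` to `o` for each item `o` she gets, with at least
one strict preference. -/
def ParetoOptimal {n : ℕ} {ι : Type} (P : Fin n → LinearOrder ι) (M : ι → Fin n) : Prop :=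
  ¬ ∃ f : ι ≃ ι, (∀ o : ι, (P (M o)).le o (f o)) ∧ (∃ o : ι, (P (M o)).lt o (f o))

/-- A policy is balanced if every agent has exactly `k` turns. -/
def BalancedPolicy {n : ℕ} (k : ℕ) (π : List (Fin n)) : Prop :=
  ∀ a : Fin n, π.count a = k

/-- An allocation is balanced if every agent receives exactly `k` items. -/
def BalancedAlloc {n : ℕ} {ι : Type} [Fintype ι] (k : ℕ) (M : ι → Fin n) : Prop :=
  ∀ a : Fin n, (Finset.univ.filter (fun o => M o = a)).card = k

/-- A policy is recursively balanced if it splits into `k` consecutive rounds of `n`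
turns each, every agent having exactly one turn in each round. -/
def RecBalanced (n k : ℕ) (π : List (Fin n)) : Prop :=
  ∃ rounds : List (List (Fin n)), rounds.length = k ∧
    (∀ r ∈ rounds, r.length = n ∧ ∀ a : Fin n, r.count a = 1) ∧
    π = rounds.flatten

/-- A strict alternation policy: every one of the `k` rounds uses the same order `σ`
over the agents. -/
def StrictAlt (n k : ℕ) (π : List (Fin n)) : Prop :=
  ∃ σ : List (Fin n), σ.length = n ∧ (∀ a : Fin n, σ.count a = 1) ∧
    π = (List.replicate k σ).flatten

/-- A balanced alternation policy: odd-numbered rounds use the order `σ` over the agents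
and even-numbered rounds use its reverse. -/
def BalAlt (n k : ℕ) (π : List (Fin n)) : Prop :=
  ∃ σ : List (Fin n), σ.length = n ∧ (∀ a : Fin n, σ.count a = 1) ∧
    π = ((List.range k).map (fun r => if r % 2 = 0 then σ else σ.reverse)).flatten

/-- `p j i` (for `1 ≤ i ≤ k`) is the item ranked `i`-th by agent `j` among the items `M`
allocates to `j`: it is allocated to `j`, and exactly `i - 1` of the items allocated
to `j` are strictly preferred to it by agent `j`. -/
def IsRankingOf {n : ℕ} {ι : Type} [Fintype ι] (P : Fin n → LinearOrder ι) (k : ℕ)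
    (M : ι → Fin n) (p : Fin n → ℕ → ι) : Prop :=
  ∀ (j : Fin n) (i : ℕ), 1 ≤ i → i ≤ k →
    M (p j i) = j ∧
    (Finset.univ.filter (fun o => M o = j ∧ (P j).lt (p j i) o)).card = i - 1

/-- Condition 3: for all `1 ≤ t < s ≤ k` and all agents `j, j'`, agent `j` strictly
prefers `p j t` to `p j' s`. -/
def Cond3 {n : ℕ} {ι : Type} (P : Fin n → LinearOrder ι) (k : ℕ) (p : Fin n → ℕ → ι) : Prop :=
  ∀ t s : ℕ, 1 ≤ t → t < s → s ≤ k → ∀ j j' : Fin n, (P j).lt (p j' s) (p j t)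

/-- The edge relation of the directed graph `G_M`: for odd `i ≤ k` an edge `a → b`
whenever `b` strictly prefers `p a i` to `p b i`, and for even `i ≤ k` an edge `a → b`
whenever `a` strictly prefers `p b i` to `p a i`. -/
def GM {n : ℕ} {ι : Type} (P : Fin n → LinearOrder ι) (k : ℕ) (p : Fin n → ℕ → ι)
    (a b : Fin n) : Prop :=
  (∃ i : ℕ, 1 ≤ i ∧ i ≤ k ∧ i % 2 = 1 ∧ (P b).lt (p b i) (p a i)) ∨
  (∃ i : ℕ, 1 ≤ i ∧ i ≤ k ∧ i % 2 = 0 ∧ (P a).lt (p a i) (p b i))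

/-- The edge relation of the directed graph `H_M`: for each `i ≤ k` an edge `a → b`
whenever `b` strictly prefers `p a i` to `p b i`. -/
def HM {n : ℕ} {ι : Type} (P : Fin n → LinearOrder ι) (k : ℕ) (p : Fin n → ℕ → ι)
    (a b : Fin n) : Prop :=
  ∃ i : ℕ, 1 ≤ i ∧ i ≤ k ∧ (P b).lt (p b i) (p a i)

/-- The `k` most preferred items of agent `j`: those items with fewer than `k` items
strictly preferred to them by `j`. -/
noncomputable def topItems {n : ℕ} {ι : Type} [Fintype ι] (P : Fin n → LinearOrder ι)
    (k : ℕ) (j : Fin n) : Finset ι :=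
  Finset.univ.filter (fun o => (Finset.univ.filter (fun o' => (P j).lt o o')).card < k)

/-- The rank of item `o` in agent `j`'s preference (the most preferred item has rank 1). -/
noncomputable def rankOf {n : ℕ} {ι : Type} [Fintype ι] (P : Fin n → LinearOrder ι)
    (j : Fin n) (o : ι) : ℕ :=
  (Finset.univ.filter (fun o' => (P j).lt o o')).card + 1
/- AUX LEMMAS -/
section Aux

lemma favorite_mem' {ι : Type} (L : LinearOrder ι) (S : Finset ι) (h : S.Nonempty) :
    favorite L S h ∈ S := @Finset.max'_mem ι L S h

lemma le_favorite' {ι : Type} (L : LinearOrder ι) (S : Finset ι) (h : S.Nonempty)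
    {o : ι} (ho : o ∈ S) : L.le o (favorite L S h) := @Finset.le_max' ι L S o ho

variable {n : ℕ} {ι : Type} [Fintype ι] [DecidableEq ι] (P : Fin n → LinearOrder ι)

lemma seqAlloc_snd_mem : ∀ (π : List (Fin n)) (S : Finset ι) (b : Fin n) (o : ι),
    (b, o) ∈ seqAlloc P π S → o ∈ S := by
  intro π
  induction π with
  | nil => intro S b o h; simp [seqAlloc] at h
  | cons a rest ih =>
    intro S b o h
    rw [seqAlloc] at h
    split at h
    · rcases List.mem_cons.mp h with h | h
      · have : o = favorite (P a) S (by assumption) := congrArg Prod.snd h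
        rw [this]; exact favorite_mem' _ _ _
      · exact Finset.mem_of_mem_erase (ih _ _ _ h)
    · simp at h

lemma fixed_of_outcome (M : ι → Fin n) (f : ι ≃ ι)
    (hle : ∀ o : ι, (P (M o)).le o (f o)) :
    ∀ (π : List (Fin n)) (S : Finset ι),
      (∀ o : ι, f o ∈ S ↔ o ∈ S) →
      (∀ o ∈ S, (M o, o) ∈ seqAlloc P π S) →
      ∀ o ∈ S, f o = o := by
  intro π
  induction π with
  | nil =>
    intro S hS hcov o ho
    exact absurd (hcov o ho) (by simp [seqAlloc])
  | cons a rest ih =>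
    intro S hS hcov o ho
    have hN : S.Nonempty := ⟨o, ho⟩
    have hunfold : seqAlloc P (a :: rest) S
        = (a, favorite (P a) S hN) :: seqAlloc P rest (S.erase (favorite (P a) S hN)) := by
      rw [seqAlloc, dif_pos hN]
    set v := favorite (P a) S hN with hv
    have hvS : v ∈ S := favorite_mem' _ _ _
    have hMv : M v = a := by
      have h := hcov v hvS
      rw [hunfold] at h
      rcases List.mem_cons.mp h with h | h
      · exact congrArg Prod.fst h
      · exact absurd (seqAlloc_snd_mem P _ _ _ _ h) (Finset.notMem_erase v S)
    have hfv : f v = v := by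
      letI := P a
      have h1 : (P a).le v (f v) := hMv ▸ hle v
      have h2 : (P a).le (f v) v := le_favorite' (P a) S hN ((hS v).mpr hvS)
      exact le_antisymm h2 h1
    by_cases hov : o = v
    · rw [hov, hfv]
    · have ho' : o ∈ S.erase v := Finset.mem_erase.mpr ⟨hov, ho⟩
      refine ih (S.erase v) ?_ ?_ o ho'
      · intro o'
        simp only [Finset.mem_erase, hS o']
        constructor
        · rintro ⟨h1, h2⟩
          refine ⟨?_, h2⟩
          intro he; rw [he, hfv] at h1; exact h1 rfl
        · rintro ⟨h1, h2⟩
          refine ⟨?_, h2⟩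
          intro he; exact h1 (f.injective (by rw [he, hfv]))
      · intro o' ho''
        have h := hcov o' (Finset.mem_of_mem_erase ho'')
        rw [hunfold] at h
        rcases List.mem_cons.mp h with h | h
        · exact absurd (congrArg Prod.snd h) (Finset.mem_erase.mp ho'').1
        · exact h

lemma exists_self_fav (M : ι → Fin n) (hPO : ParetoOptimal P M)
    (T : Finset ι) (hT : T.Nonempty) :
    ∃ o ∈ T, favorite (P (M o)) T hT = o := by
  by_contra hcon
  push_neg at hcon
  set g : ι → ι := fun o => if h : o ∈ T then favorite (P (M o)) T hT else o with hg
  have hgT : ∀ o ∈ T, g o ∈ T := by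
    intro o ho; simp only [hg, dif_pos ho]; exact favorite_mem' _ _ _
  have hglt : ∀ o ∈ T, (P (M o)).lt o (g o) := by
    intro o ho
    letI := P (M o)
    have h1 : (P (M o)).le o (g o) := by
      simp only [hg, dif_pos ho]; exact le_favorite' _ _ _ ho
    have h2 : g o ≠ o := by simp only [hg, dif_pos ho]; exact hcon o ho
    exact lt_of_le_of_ne h1 (Ne.symm h2)
  obtain ⟨o₀, ho₀⟩ := hT
  have horb : ∀ k, g^[k] o₀ ∈ T := by
    intro k; induction k with
    | zero => exact ho₀
    | succ k ihk => rw [Function.iterate_succ_apply']; exact hgT _ ihk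
  obtain ⟨i, j, hij, heq⟩ : ∃ i j : ℕ, i < j ∧ g^[i] o₀ = g^[j] o₀ := by
    obtain ⟨i, j, hne, heq⟩ := Finite.exists_ne_map_eq_of_infinite (fun k : ℕ => g^[k] o₀)
    rcases hne.lt_or_gt with h | h
    exacts [⟨i, j, h, heq⟩, ⟨j, i, h, heq.symm⟩]
  set y := g^[i] o₀ with hy
  set p := j - i with hpdef
  have hp : 0 < p := Nat.sub_pos_of_lt hij
  have hyp : g^[p] y = y := by
    rw [hy, ← Function.iterate_add_apply, hpdef, Nat.sub_add_cancel hij.le, ← heq]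
  set C : Finset ι := (Finset.range p).image (fun k => g^[k] y) with hC
  have hyC : y ∈ C := by
    rw [hC]; exact Finset.mem_image.mpr ⟨0, Finset.mem_range.mpr hp, rfl⟩
  have hCT : C ⊆ T := by
    intro o ho
    obtain ⟨k, _, hk⟩ := Finset.mem_image.mp ho
    rw [← hk, hy, ← Function.iterate_add_apply]; exact horb _
  have hgC : ∀ o ∈ C, g o ∈ C := by
    intro o ho
    obtain ⟨k, hkp, hk⟩ := Finset.mem_image.mp ho
    rw [Finset.mem_range] at hkp
    have hgo : g o = g^[k+1] y := by rw [← hk]; exact (Function.iterate_succ_apply' g k y).symm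
    rcases Nat.lt_or_ge (k+1) p with h | h
    · rw [hgo]; exact Finset.mem_image.mpr ⟨k+1, Finset.mem_range.mpr h, rfl⟩
    · have : k + 1 = p := le_antisymm hkp h
      rw [hgo, this, hyp]; exact hyC
  have hsurjC : ∀ o ∈ C, ∃ o' ∈ C, g o' = o := by
    intro o ho
    obtain ⟨k, hkp, hk⟩ := Finset.mem_image.mp ho
    rw [Finset.mem_range] at hkp
    rcases Nat.eq_zero_or_pos k with h0 | h0
    · refine ⟨g^[p-1] y, Finset.mem_image.mpr ⟨p-1, Finset.mem_range.mpr (Nat.sub_lt hp one_pos), rfl⟩, ?_⟩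
      have hstep : g (g^[p-1] y) = g^[p-1+1] y := (Function.iterate_succ_apply' g (p-1) y).symm
      rw [hstep, Nat.sub_add_cancel hp, hyp, ← hk, h0]
      rfl
    · refine ⟨g^[k-1] y, Finset.mem_image.mpr ⟨k-1, Finset.mem_range.mpr (lt_trans (Nat.sub_lt h0 one_pos) hkp), rfl⟩, ?_⟩
      have hstep : g (g^[k-1] y) = g^[k-1+1] y := (Function.iterate_succ_apply' g (k-1) y).symm
      rw [hstep, Nat.sub_add_cancel h0, hk]
  set f : ι → ι := fun o => if o ∈ C then g o else o with hf
  have hfsurj : Function.Surjective f := by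
    intro o
    by_cases ho : o ∈ C
    · obtain ⟨o', ho', hgo'⟩ := hsurjC o ho
      exact ⟨o', by rw [hf]; simp only [if_pos ho']; exact hgo'⟩
    · exact ⟨o, by rw [hf]; simp only [if_neg ho]⟩
  have hbij : Function.Bijective f := Finite.surjective_iff_bijective.mp hfsurj
  set e : ι ≃ ι := Equiv.ofBijective f hbij with he
  apply hPO
  refine ⟨e, ?_, y, ?_⟩
  · intro o
    have heo : e o = f o := rfl
    rw [heo, hf]
    by_cases ho : o ∈ C
    · simp only [if_pos ho]
      letI := P (M o)
      exact le_of_lt (hglt o (hCT ho))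
    · simp only [if_neg ho]
      letI := P (M o)
      exact le_refl o
  · have heo : e y = f y := rfl
    rw [heo, hf]
    simp only [if_pos hyC]
    exact hglt y (hCT hyC)

lemma build_policy (M : ι → Fin n) (hMinj : Function.Injective M)
    (hPO : ParetoOptimal P M) :
    ∀ T : Finset ι, ∃ π : List (Fin n), π.Nodup ∧
      (∀ a : Fin n, a ∈ π ↔ ∃ o ∈ T, M o = a) ∧
      (∀ o ∈ T, (M o, o) ∈ seqAlloc P π T) := by
  intro T
  induction T using Finset.strongInduction with
  | _ T ih =>
    by_cases hT : T.Nonempty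
    · obtain ⟨o₀, ho₀, hfav⟩ := exists_self_fav P M hPO T hT
      obtain ⟨π', hnd, hmem, hseq⟩ := ih (T.erase o₀) (Finset.erase_ssubset ho₀)
      have hunfold : seqAlloc P (M o₀ :: π') T
          = (M o₀, o₀) :: seqAlloc P π' (T.erase o₀) := by
        rw [seqAlloc, dif_pos hT, hfav]
      refine ⟨M o₀ :: π', ?_, ?_, ?_⟩
      · refine List.nodup_cons.mpr ⟨?_, hnd⟩
        intro hmem'
        obtain ⟨o, ho, hMo⟩ := (hmem _).mp hmem'
        have : o = o₀ := hMinj hMo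
        rw [this] at ho
        exact (Finset.mem_erase.mp ho).1 rfl
      · intro a
        rw [List.mem_cons, hmem a]
        constructor
        · rintro (rfl | ⟨o, ho, rfl⟩)
          · exact ⟨o₀, ho₀, rfl⟩
          · exact ⟨o, Finset.mem_of_mem_erase ho, rfl⟩
        · rintro ⟨o, ho, rfl⟩
          by_cases h : o = o₀
          · left; rw [h]
          · right; exact ⟨o, Finset.mem_erase.mpr ⟨h, ho⟩, rfl⟩
      · intro o ho
        rw [hunfold]
        by_cases h : o = o₀
        · rw [h]; exact List.mem_cons_self
        · exact List.mem_cons_of_mem _ (hseq o (Finset.mem_erase.mpr ⟨h, ho⟩))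
    · rw [Finset.not_nonempty_iff_eq_empty] at hT
      subst hT
      exact ⟨[], List.nodup_nil, by simp, by simp⟩

end Aux

/-- For `m = n` (`k = 1`), an allocation in which each agent receives
exactly one item is Pareto optimal iff it is the outcome of some serial dictatorship
(a policy in which every agent has exactly one turn). -/
theorem serial_dictatorship_characterization
    {ι : Type} [Fintype ι] [DecidableEq ι] {n : ℕ} (hn : 0 < n)
    (hcard : Fintype.card ι = n)
    (P : Fin n → LinearOrder ι) (M : ι → Fin n)
    (hM : ∀ a : Fin n, (Finset.univ.filter (fun o => M o = a)).card = 1) :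
    ParetoOptimal P M ↔
      ∃ π : List (Fin n), (∀ a : Fin n, π.count a = 1) ∧ IsOutcome P π M := by
  constructor
  · intro hPO
    have hMinj : Function.Injective M := by
      intro o o' h
      have h1 := hM (M o)
      have h2 := Finset.card_le_one.mp (le_of_eq h1)
      exact h2 o (by simp) o' (by simp [h])
    have hMsurj : Function.Surjective M := by
      have : Function.Bijective M := (Fintype.bijective_iff_injective_and_card M).mpr
        ⟨hMinj, by simp [hcard]⟩
      exact this.surjective
    obtain ⟨π, hnd, hmem, hseq⟩ := build_policy P M hMinj hPO Finset.univ
    refine ⟨π, ?_, ?_⟩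
    · intro a
      have ha : a ∈ π := (hmem a).mpr (by obtain ⟨o, ho⟩ := hMsurj a; exact ⟨o, Finset.mem_univ o, ho⟩)
      exact List.count_eq_one_of_mem hnd ha
    · intro o
      exact hseq o (Finset.mem_univ o)
  · rintro ⟨π, hcount, hout⟩
    rintro ⟨f, hle, o₀, hlt⟩
    have hfix := fixed_of_outcome P M f hle π Finset.univ (by simp)
      (fun o _ => hout o) o₀ (Finset.mem_univ o₀)
    rw [hfix] at hlt
    letI := P (M o₀)
    exact lt_irrefl o₀ hlt
end

section
/- Let π be a balanced policy under which agent a_1 does not receive exactly her k most preferred items in I, and let π' be the balanced policy obtained from π by moving all of a_1's turns to the end of the sequence while keeping the relative order of all other turns unchanged. Then agent a_1 also does not receive exactly her k most preferred items under π'. -/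
open Finset
open scoped Classical

section Aux
variable {ι : Type} [DecidableEq ι] {n : ℕ} (P : Fin n → LinearOrder ι)

lemma fav_mem {L : LinearOrder ι} {S : Finset ι} (h : S.Nonempty) : favorite L S h ∈ S :=
  @Finset.max'_mem ι L S h

lemma fav_le {L : LinearOrder ι} {S : Finset ι} (h : S.Nonempty) {o : ι} (ho : o ∈ S) :
    L.le o (favorite L S h) :=
  @Finset.le_max' ι L S o ho

lemma seqAlloc_cons (a : Fin n) (rest : List (Fin n)) (S : Finset ι) (h : S.Nonempty) :
    seqAlloc P (a :: rest) S =
      (a, favorite (P a) S h) :: seqAlloc P rest (S.erase (favorite (P a) S h)) := by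
  simp [seqAlloc, dif_pos h]

lemma seqAlloc_mem : ∀ (l : List (Fin n)) (S : Finset ι) (b : Fin n) (o : ι),
    (b, o) ∈ seqAlloc P l S → b ∈ l ∧ o ∈ S := by
  intro l
  induction l with
  | nil => intro S b o hm; simp [seqAlloc] at hm
  | cons a rest ih =>
    intro S b o hm
    by_cases h : S.Nonempty
    · rw [seqAlloc_cons P a rest S h] at hm
      rcases List.mem_cons.mp hm with h1 | h1
      · simp only [Prod.mk.injEq] at h1
        obtain ⟨rfl, rfl⟩ := h1
        exact ⟨List.mem_cons_self, fav_mem h⟩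
      · obtain ⟨hb, ho⟩ := ih _ b o h1
        exact ⟨List.mem_cons_of_mem _ hb, (Finset.erase_subset _ _) ho⟩
    · simp [seqAlloc, dif_neg h] at hm

/-- The items agent `a` picks when the turn list `l` is run on available set `S`. -/
noncomputable def picksOf (a : Fin n) (l : List (Fin n)) (S : Finset ι) : Finset ι :=
  (((seqAlloc P l S).filter (fun q => q.1 = a)).map Prod.snd).toFinset

lemma mem_picksOf {a : Fin n} {l : List (Fin n)} {S : Finset ι} {o : ι} :
    o ∈ picksOf P a l S ↔ (a, o) ∈ seqAlloc P l S := by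
  simp only [picksOf, List.mem_toFinset, List.mem_map, List.mem_filter,
    decide_eq_true_eq]
  constructor
  · rintro ⟨⟨b, o'⟩, ⟨hm, rfl⟩, rfl⟩; exact hm
  · intro hm; exact ⟨(a, o), ⟨hm, rfl⟩, rfl⟩

lemma picksOf_nil (a : Fin n) (S : Finset ι) : picksOf P a [] S = ∅ := rfl

lemma picksOf_cons_self (a : Fin n) (rest : List (Fin n)) (S : Finset ι) (h : S.Nonempty) :
    picksOf P a (a :: rest) S =
      insert (favorite (P a) S h) (picksOf P a rest (S.erase (favorite (P a) S h))) := by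
  ext o
  simp only [mem_picksOf P, seqAlloc_cons P a rest S h, List.mem_cons, Prod.mk.injEq,
    Finset.mem_insert, true_and]

lemma picksOf_cons_ne {a c : Fin n} (hc : c ≠ a) (rest : List (Fin n)) (S : Finset ι)
    (h : S.Nonempty) :
    picksOf P a (c :: rest) S = picksOf P a rest (S.erase (favorite (P c) S h)) := by
  ext o
  simp only [mem_picksOf P, seqAlloc_cons P c rest S h, List.mem_cons, Prod.mk.injEq]
  have : ¬ (a = c) := fun hh => hc hh.symm
  tauto

lemma picksOf_subset (a : Fin n) (l : List (Fin n)) (S : Finset ι) :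
    picksOf P a l S ⊆ S := by
  intro o ho
  exact (seqAlloc_mem P l S a o ((mem_picksOf P).mp ho)).2

lemma picksOf_not_mem {a : Fin n} {l : List (Fin n)} (ha : a ∉ l) (S : Finset ι) :
    picksOf P a l S = ∅ := by
  ext o
  simp only [Finset.notMem_empty, iff_false, mem_picksOf P]
  intro hm
  exact ha (seqAlloc_mem P l S a o hm).1

/-- The remaining items after running turn list `l` on available set `S`. -/
noncomputable def rem : List (Fin n) → Finset ι → Finset ι
  | [], S => S
  | a :: rest, S =>
    if h : S.Nonempty then rem rest (S.erase (favorite (P a) S h)) else S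

lemma rem_nil (S : Finset ι) : rem P [] S = S := rfl

lemma rem_cons (a : Fin n) (rest : List (Fin n)) (S : Finset ι) (h : S.Nonempty) :
    rem P (a :: rest) S = rem P rest (S.erase (favorite (P a) S h)) := by
  simp [rem, dif_pos h]

lemma card_rem : ∀ (l : List (Fin n)) (S : Finset ι), l.length ≤ S.card →
    (rem P l S).card + l.length = S.card := by
  intro l
  induction l with
  | nil => intro S _; simp [rem_nil]
  | cons a rest ih =>
    intro S hlen
    simp only [List.length_cons] at hlen
    have hpos : 0 < S.card := lt_of_lt_of_le (Nat.succ_pos _) hlen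
    have h : S.Nonempty := Finset.card_pos.mp hpos
    rw [rem_cons P a rest S h]
    have hcard : (S.erase (favorite (P a) S h)).card = S.card - 1 :=
      Finset.card_erase_of_mem (fav_mem h)
    have hle : rest.length ≤ (S.erase (favorite (P a) S h)).card := by
      rw [hcard]; omega
    have := ih (S.erase (favorite (P a) S h)) hle
    rw [hcard] at this
    simp only [List.length_cons]
    omega

lemma seqAlloc_append : ∀ (l1 l2 : List (Fin n)) (S : Finset ι), l1.length ≤ S.card →
    seqAlloc P (l1 ++ l2) S = seqAlloc P l1 S ++ seqAlloc P l2 (rem P l1 S) := by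
  intro l1
  induction l1 with
  | nil => intro l2 S _; simp [seqAlloc, rem_nil]
  | cons a rest ih =>
    intro l2 S hlen
    simp only [List.length_cons] at hlen
    have hpos : 0 < S.card := lt_of_lt_of_le (Nat.succ_pos _) hlen
    have h : S.Nonempty := Finset.card_pos.mp hpos
    rw [List.cons_append, seqAlloc_cons P a (rest ++ l2) S h, seqAlloc_cons P a rest S h,
      rem_cons P a rest S h, List.cons_append]
    congr 1
    apply ih
    rw [Finset.card_erase_of_mem (fav_mem h)]
    omega

lemma card_picksOf (a : Fin n) : ∀ (l : List (Fin n)) (S : Finset ι),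
    l.length ≤ S.card → (picksOf P a l S).card = l.count a := by
  intro l
  induction l with
  | nil => intro S _; simp [picksOf_nil]
  | cons c rest ih =>
    intro S hlen
    simp only [List.length_cons] at hlen
    have hpos : 0 < S.card := lt_of_lt_of_le (Nat.succ_pos _) hlen
    have h : S.Nonempty := Finset.card_pos.mp hpos
    have hle : rest.length ≤ (S.erase (favorite (P c) S h)).card := by
      rw [Finset.card_erase_of_mem (fav_mem h)]
      omega
    by_cases hc : c = a
    · subst hc
      rw [picksOf_cons_self P c rest S h]
      rw [Finset.card_insert_of_notMem, ih _ hle, List.count_cons_self]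
      intro hmem
      exact (Finset.notMem_erase _ _) (picksOf_subset P c rest _ hmem)
    · rw [picksOf_cons_ne P hc rest S h, ih _ hle, List.count_cons_of_ne]
      exact hc

lemma picksOf_replicate (a : Fin n) : ∀ (m : ℕ) (B : Finset ι), B.card = m →
    picksOf P a (List.replicate m a) B = B := by
  intro m
  induction m with
  | zero =>
    intro B hB
    rw [List.replicate_zero, picksOf_nil]
    exact (Finset.card_eq_zero.mp hB).symm
  | succ m ih =>
    intro B hB
    have h : B.Nonempty := Finset.card_pos.mp (by omega)
    rw [List.replicate_succ, picksOf_cons_self P a _ B h,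
      ih _ (by rw [Finset.card_erase_of_mem (fav_mem h)]; omega),
      Finset.insert_erase (fav_mem h)]

/-- The key invariant lemma. `A` is the current available set for the run of the
original policy, `B` the available set for the run where `a1`'s turns are deleted,
`R` the set of items `a1` has picked so far, and `g` an injection witnessing that
the extra items available in `B` are pointwise weakly worse for `a1` than her picks. -/
lemma main_inv (a1 : Fin n) :
    ∀ (l : List (Fin n)) (A B R : Finset ι) (g : ι → ι),
    l.length ≤ A.card → A ⊆ B →
    (∀ o ∈ B \ A, ∀ o' ∈ B \ A, g o = g o' → o = o') →
    (∀ o ∈ B \ A, g o ∈ R ∧ (P a1).le o (g o)) →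
    (∀ o ∈ A, ∀ p ∈ R, (P a1).le o p) →
    (∀ p ∈ R, p ∉ A) →
    ∃ g' : ι → ι,
      (∀ o ∈ rem P (l.filter (fun a => a ≠ a1)) B \ rem P l A,
       ∀ o' ∈ rem P (l.filter (fun a => a ≠ a1)) B \ rem P l A, g' o = g' o' → o = o') ∧
      (∀ o ∈ rem P (l.filter (fun a => a ≠ a1)) B \ rem P l A,
        g' o ∈ R ∪ picksOf P a1 l A ∧ (P a1).le o (g' o)) := by
  intro l
  induction l with
  | nil =>
    intro A B R g _ _ hinj hmem _ _
    refine ⟨g, ?_, ?_⟩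
    · simpa [rem_nil] using hinj
    · simpa [rem_nil, picksOf_nil] using hmem
  | cons c rest ih =>
    intro A B R g hlen hAB hinj hmem hAR hRA
    simp only [List.length_cons] at hlen
    have hposA : 0 < A.card := lt_of_lt_of_le (Nat.succ_pos _) hlen
    have hA : A.Nonempty := Finset.card_pos.mp hposA
    have hB : B.Nonempty := hA.mono hAB
    set x := favorite (P c) A hA with hxdef
    have hxA : x ∈ A := fav_mem hA
    have hxB : x ∈ B := hAB hxA
    have hlen' : rest.length ≤ (A.erase x).card := by
      rw [Finset.card_erase_of_mem hxA]
      omega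
    by_cases hc : c = a1
    · -- c's turn: she picks x; B is unchanged.
      subst hc
      have hfilter : (c :: rest).filter (fun a => a ≠ c) = rest.filter (fun a => a ≠ c) := by
        simp [List.filter_cons]
      rw [hfilter, rem_cons P c rest A hA, picksOf_cons_self P c rest A hA, ← hxdef]
      have hdiff : B \ A.erase x = insert x (B \ A) := by
        ext o
        simp only [Finset.mem_sdiff, Finset.mem_erase, Finset.mem_insert, not_and, ne_eq]
        constructor
        · rintro ⟨hoB, ho⟩
          by_cases hox : o = x
          · exact Or.inl hox
          · exact Or.inr ⟨hoB, fun hoA => (ho (fun hh => hox hh) hoA).elim⟩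
        · rintro (rfl | ⟨hoB, hoA⟩)
          · exact ⟨hxB, fun hne _ => hne rfl⟩
          · exact ⟨hoB, fun _ h2 => hoA h2⟩
      obtain ⟨g', hg1, hg2⟩ := ih (A.erase x) B (insert x R) (Function.update g x x)
        hlen' ((Finset.erase_subset _ _).trans hAB)
        (by
          rw [hdiff]
          intro o ho o' ho' heq
          have keyval : ∀ z ∈ B \ A, Function.update g x x z = g z := by
            intro z hz
            have : z ≠ x := fun hzx => (Finset.mem_sdiff.mp hz).2 (hzx ▸ hxA)
            simp [Function.update_of_ne this]
          have keyne : ∀ z ∈ B \ A, g z ≠ x := by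
            intro z hz hgz
            exact hRA (g z) (hmem z hz).1 (hgz ▸ hxA)
          rcases Finset.mem_insert.mp ho with rfl | ho <;>
            rcases Finset.mem_insert.mp ho' with h' | ho'
          · exact h'.symm ▸ rfl
          · rw [Function.update_self, keyval o' ho'] at heq
            exact absurd heq.symm (keyne o' ho')
          · subst h'
            rw [Function.update_self, keyval o ho] at heq
            exact absurd heq (keyne o ho)
          · rw [keyval o ho, keyval o' ho'] at heq
            exact hinj o ho o' ho' heq
        )
        (by
          rw [hdiff]
          intro o ho
          rcases Finset.mem_insert.mp ho with rfl | ho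
          · simp [Function.update_self, (P c).le_refl]
          · have : o ≠ x := fun hzx => (Finset.mem_sdiff.mp ho).2 (hzx ▸ hxA)
            rw [Function.update_of_ne this]
            exact ⟨Finset.mem_insert_of_mem (hmem o ho).1, (hmem o ho).2⟩
        )
        (by
          intro o ho p hp
          rcases Finset.mem_insert.mp hp with rfl | hp
          · exact fav_le hA (Finset.mem_of_mem_erase ho)
          · exact hAR o (Finset.mem_of_mem_erase ho) p hp
        )
        (by
          intro p hp
          rcases Finset.mem_insert.mp hp with rfl | hp
          · exact Finset.notMem_erase _ _
          · exact fun hmem' => hRA p hp (Finset.mem_of_mem_erase hmem')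
        )
      refine ⟨g', hg1, ?_⟩
      intro o ho
      have := hg2 o ho
      rwa [Finset.insert_union, ← Finset.union_insert] at this
    · -- another agent's turn.
      set y := favorite (P c) B hB with hydef
      have hyB : y ∈ B := fav_mem hB
      have hfilter : (c :: rest).filter (fun a => a ≠ a1)
          = c :: rest.filter (fun a => a ≠ a1) := by
        simp [List.filter_cons, hc]
      rw [hfilter, rem_cons P c _ B hB, rem_cons P c rest A hA,
        picksOf_cons_ne P (fun h => hc h) rest A hA, ← hxdef, ← hydef]
      by_cases hyA : y ∈ A
      · -- the two runs pick the same item.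
        have hxy : x = y :=
          (P c).le_antisymm x y (fav_le hB hxB) (fav_le hA hyA)
        rw [← hxy]
        have hdiff : B.erase x \ A.erase x = B \ A := by
          ext o
          simp only [Finset.mem_sdiff, Finset.mem_erase, not_and, ne_eq]
          constructor
          · rintro ⟨⟨hox, hoB⟩, ho⟩
            exact ⟨hoB, fun hoA => (ho (fun hh => hox hh) hoA).elim⟩
          · rintro ⟨hoB, hoA⟩
            exact ⟨⟨fun hh => hoA (hh ▸ hxA), hoB⟩, fun _ h2 => hoA h2⟩
        exact ih (A.erase x) (B.erase x) R g hlen'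
          (Finset.erase_subset_erase _ hAB)
          (by rw [hdiff]; exact hinj)
          (by rw [hdiff]; exact hmem)
          (fun o ho p hp => hAR o (Finset.mem_of_mem_erase ho) p hp)
          (fun p hp hmem' => hRA p hp (Finset.mem_of_mem_erase hmem'))
      · -- the cut run picks an extra item y ∉ A; exchange it against x.
        have hyBA : y ∈ B \ A := Finset.mem_sdiff.mpr ⟨hyB, hyA⟩
        have hxy : x ≠ y := fun hh => hyA (hh ▸ hxA)
        have hdiff : B.erase y \ A.erase x = insert x ((B \ A).erase y) := by
          ext o
          simp only [Finset.mem_sdiff, Finset.mem_erase, Finset.mem_insert, not_and, ne_eq]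
          constructor
          · rintro ⟨⟨hoy, hoB⟩, ho⟩
            by_cases hox : o = x
            · exact Or.inl hox
            · exact Or.inr ⟨hoy, hoB, fun hoA => (ho (fun hh => hox hh) hoA).elim⟩
          · rintro (rfl | ⟨hoy, hoB, hoA⟩)
            · exact ⟨⟨hxy, hxB⟩, fun hne _ => hne rfl⟩
            · exact ⟨⟨hoy, hoB⟩, fun _ h2 => hoA h2⟩
        have hnotBA : x ∉ B \ A := fun hh => (Finset.mem_sdiff.mp hh).2 hxA
        refine ih (A.erase x) (B.erase y) R (Function.update g x (g y)) hlen'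
          ?_ ?_ ?_
          (fun o ho p hp => hAR o (Finset.mem_of_mem_erase ho) p hp)
          (fun p hp hmem' => hRA p hp (Finset.mem_of_mem_erase hmem'))
        · intro o ho
          have hoA : o ∈ A := Finset.mem_of_mem_erase ho
          refine Finset.mem_erase.mpr ⟨fun hh => hyA (hh ▸ hoA), hAB hoA⟩
        · rw [hdiff]
          have keyval : ∀ z ∈ (B \ A).erase y, Function.update g x (g y) z = g z := by
            intro z hz
            have : z ≠ x := fun hzx =>
              (Finset.mem_sdiff.mp (Finset.mem_of_mem_erase hz)).2 (hzx ▸ hxA)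
            simp [Function.update_of_ne this]
          intro o ho o' ho' heq
          rcases Finset.mem_insert.mp ho with rfl | ho <;>
            rcases Finset.mem_insert.mp ho' with h' | ho'
          · exact h'.symm ▸ rfl
          · rw [Function.update_self, keyval o' ho'] at heq
            have := hinj y hyBA o' (Finset.mem_of_mem_erase ho') heq
            exact absurd this.symm (Finset.mem_erase.mp ho').1
          · subst h'
            rw [Function.update_self, keyval o ho] at heq
            have := hinj o (Finset.mem_of_mem_erase ho) y hyBA heq
            exact absurd this (Finset.mem_erase.mp ho).1
          · rw [keyval o ho, keyval o' ho'] at heq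
            exact hinj o (Finset.mem_of_mem_erase ho) o' (Finset.mem_of_mem_erase ho') heq
        · rw [hdiff]
          intro o ho
          rcases Finset.mem_insert.mp ho with rfl | ho
          · rw [Function.update_self]
            exact ⟨(hmem y hyBA).1, hAR x hxA _ (hmem y hyBA).1⟩
          · have : o ≠ x := fun hzx =>
              (Finset.mem_sdiff.mp (Finset.mem_of_mem_erase ho)).2 (hzx ▸ hxA)
            rw [Function.update_of_ne this]
            exact hmem o (Finset.mem_of_mem_erase ho)

end Aux
lemma length_eq_sum_count' {n : ℕ} (l : List (Fin n)) : l.length = ∑ a : Fin n, l.count a := by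
  classical
  have h := Multiset.toFinset_sum_count_eq (l : Multiset (Fin n))
  have h2 : ∑ a ∈ (l : Multiset (Fin n)).toFinset, (l : Multiset (Fin n)).count a
      = ∑ a : Fin n, (l : Multiset (Fin n)).count a :=
    Finset.sum_subset (Finset.subset_univ _) (by
      intro x _ hx
      rw [Multiset.count_eq_zero]
      intro hm
      exact hx (Multiset.mem_toFinset.mpr hm))
  simp only [Multiset.coe_count] at h2
  rw [← h2]
  simp [h]

lemma receives_eq_picksOf {n : ℕ} {ι : Type} [Fintype ι] [DecidableEq ι]
    (P : Fin n → LinearOrder ι) (l : List (Fin n)) (a : Fin n) :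
    receives P l a = picksOf P a l Finset.univ := by
  ext o
  simp [receives, mem_picksOf P]


/-- If under a balanced policy `π` agent `a_1` does not receive exactly her
`k` most preferred items, then she does not receive them either under the balanced
policy obtained from `π` by moving all of `a_1`'s turns to the end (keeping the relative
order of the other turns). -/
theorem move_turns_to_end
    {ι : Type} [Fintype ι] [DecidableEq ι] {n k : ℕ} (hn : 0 < n) (hk : 1 ≤ k)
    (hcard : Fintype.card ι = k * n)
    (P : Fin n → LinearOrder ι) (a1 : Fin n) (π : List (Fin n))
    (hπ : BalancedPolicy k π)
    (h : receives P π a1 ≠ topItems P k a1) :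
    receives P (π.filter (fun a => a ≠ a1) ++ List.replicate k a1) a1
      ≠ topItems P k a1 := by
  intro heq
  apply h
  set T := topItems P k a1 with hT
  set ρ := π.filter (fun a => a ≠ a1) with hρ
  have hUcard : (Finset.univ : Finset ι).card = k * n := by
    rw [Finset.card_univ, hcard]
  have hπlen : π.length = k * n := by
    have hπ' : ∀ a : Fin n, π.count a = k := hπ
    rw [length_eq_sum_count' π]
    simp only [hπ']
    simp [Finset.sum_const, mul_comm]
  have ha1ρ : a1 ∉ ρ := by simp [hρ]
  have hρlen : ρ.length + k = k * n := by
    have h1 : ρ.length = ∑ a : Fin n, ρ.count a := length_eq_sum_count' ρ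
    have h2 : ∀ a : Fin n, π.count a = ρ.count a + (if a = a1 then k else 0) := by
      intro a
      by_cases ha : a = a1
      · subst ha
        rw [List.count_eq_zero_of_not_mem ha1ρ, if_pos rfl, hπ a, zero_add]
      · rw [hρ, List.count_filter (by simpa using ha), if_neg ha, add_zero]
    have h3 : π.length = ρ.length + k := by
      rw [length_eq_sum_count' π, h1]
      calc ∑ a : Fin n, π.count a
          = ∑ a : Fin n, (ρ.count a + (if a = a1 then k else 0)) := by
            exact Finset.sum_congr rfl (fun a _ => h2 a)
        _ = (∑ a : Fin n, ρ.count a) + ∑ a : Fin n, (if a = a1 then k else 0) := by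
            rw [Finset.sum_add_distrib]
        _ = (∑ a : Fin n, ρ.count a) + k := by
            rw [Finset.sum_ite_eq' Finset.univ a1 (fun _ => k), if_pos (Finset.mem_univ a1)]
    omega
  have hρle : ρ.length ≤ (Finset.univ : Finset ι).card := by rw [hUcard]; omega
  have hAf : rem P π (Finset.univ : Finset ι) = ∅ := by
    have := card_rem P π Finset.univ (by rw [hUcard, hπlen])
    rw [hUcard, hπlen] at this
    exact Finset.card_eq_zero.mp (by omega)
  have hBf : (rem P ρ (Finset.univ : Finset ι)).card = k := by
    have := card_rem P ρ Finset.univ hρle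
    rw [hUcard] at this
    omega
  -- the receives under the modified policy is exactly the leftover set
  have hrec' : receives P (ρ ++ List.replicate k a1) a1 = rem P ρ Finset.univ := by
    ext o
    simp only [receives, Finset.mem_filter, Finset.mem_univ, true_and]
    rw [seqAlloc_append P ρ _ Finset.univ hρle, List.mem_append]
    constructor
    · rintro (hm | hm)
      · exact absurd (seqAlloc_mem P ρ Finset.univ a1 o hm).1 ha1ρ
      · have : o ∈ picksOf P a1 (List.replicate k a1) (rem P ρ Finset.univ) :=
          (mem_picksOf P).mpr hm
        rwa [picksOf_replicate P a1 k _ hBf] at this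
    · intro ho
      right
      exact (mem_picksOf P).mp (by rw [picksOf_replicate P a1 k _ hBf]; exact ho)
  have heqB : rem P ρ (Finset.univ : Finset ι) = T := by rw [← hrec']; exact heq
  -- the main invariant applied to the full run
  obtain ⟨g, hginj, hgmem⟩ := main_inv P a1 π Finset.univ Finset.univ ∅ id
    (by rw [hUcard, hπlen]) (subset_refl _)
    (by simp) (by simp) (by simp) (by simp)
  rw [← hρ, hAf, Finset.sdiff_empty, heqB] at hginj hgmem
  simp only [Finset.empty_union] at hgmem
  set Rf := picksOf P a1 π (Finset.univ : Finset ι) with hRf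
  have hRfcard : Rf.card = k := by
    rw [hRf, card_picksOf P a1 π Finset.univ (by rw [hUcard, hπlen]), hπ a1]
  have hTcard : T.card = k := by rw [← heqB]; exact hBf
  -- T is upward closed w.r.t. a1's preference
  have hup : ∀ o ∈ T, ∀ p : ι, (P a1).le o p → p ∈ T := by
    intro o ho p hle
    rw [hT, topItems, Finset.mem_filter] at ho ⊢
    refine ⟨Finset.mem_univ _, lt_of_le_of_lt (Finset.card_le_card ?_) ho.2⟩
    intro z hz
    rw [Finset.mem_filter] at hz ⊢
    exact ⟨Finset.mem_univ _, @lt_of_le_of_lt ι (P a1).toPreorder o p z hle hz.2⟩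
  have himg1 : T.image g ⊆ Rf := by
    intro z hz
    obtain ⟨o, ho, rfl⟩ := Finset.mem_image.mp hz
    exact (hgmem o ho).1
  have himgcard : (T.image g).card = k := by
    rw [Finset.card_image_of_injOn (fun o ho o' ho' => hginj o ho o' ho'), hTcard]
  have himg_eq : T.image g = Rf :=
    Finset.eq_of_subset_of_card_le himg1 (by rw [himgcard, hRfcard])
  have himg2 : T.image g ⊆ T := by
    intro z hz
    obtain ⟨o, ho, rfl⟩ := Finset.mem_image.mp hz
    exact hup o ho (g o) (hgmem o ho).2
  have hRfT : Rf ⊆ T := himg_eq ▸ himg2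
  have : Rf = T := Finset.eq_of_subset_of_card_le hRfT (by rw [hRfcard, hTcard])
  rw [receives_eq_picksOf P π a1, ← hRf, this]
end
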